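/- For each base b ≥ 3, there exists a constant C such that for all n ≥ 3, the Erdős–Sloane persistence of n satisfies ν_b^*(n) ≤ (log log n)/log(α^{−1}) + C, where α = log_b(b−1). In particular, limsup_{n→∞} ν_b^*(n)/(log log n) ≤ 1/log(α^{−1}). -/

import Mathlib

/-- The Erdős–Sloane map in base b: product of the nonzero base-b digits. -/
def erdosSloane (b n : ℕ) : ℕ := ((Nat.digits b n).filter (· ≠ 0)).prod

/-- The Erdős–Sloane persistence: least k such that the k-th iterate is a single digit. -/
noncomputable def erdosPersistence (b n : ℕ) : ℕ := sInf {k : ℕ | (erdosSloane b)^[k] n < b}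

lemma es_rec (b n : ℕ) (hb : 1 < b) (hn : n ≠ 0) :
    erdosSloane b n = (if n % b = 0 then 1 else n % b) * erdosSloane b (n / b) := by
  unfold erdosSloane
  rw [Nat.digits_def' hb (Nat.pos_of_ne_zero hn), List.filter_cons]
  by_cases h : n % b = 0 <;> simp [h]

lemma es_pos (b n : ℕ) : 0 < erdosSloane b n := by
  apply List.prod_pos
  intro x hx
  have := List.of_mem_filter hx
  simp at this
  omega

lemma es_le (b : ℕ) (hb : 1 < b) : ∀ n, 1 ≤ n → erdosSloane b n ≤ n := by
  intro n
  induction n using Nat.strong_induction_on with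
  | _ n ih =>
    intro hn
    rcases lt_or_ge n b with h | h
    · rw [es_rec b n hb (by omega), Nat.mod_eq_of_lt h, Nat.div_eq_of_lt h]
      have h0 : erdosSloane b 0 = 1 := by simp [erdosSloane]
      rw [h0, if_neg (by omega), mul_one]
    · have hq : 1 ≤ n / b := (Nat.one_le_div_iff (by omega)).mpr h
      have hqlt : n / b < n := Nat.div_lt_self (by omega) hb
      have hih := ih (n / b) hqlt hq
      have hdm := Nat.div_add_mod n b
      have hm : n % b < b := Nat.mod_lt n (by omega)
      rw [es_rec b n hb (by omega)]
      by_cases hr : n % b = 0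
      · rw [if_pos hr, one_mul]; omega
      · rw [if_neg hr]
        calc n % b * erdosSloane b (n / b) ≤ (b - 1) * (n / b) :=
              Nat.mul_le_mul (by omega) hih
          _ ≤ n := by
              have key : (b - 1) * (n / b) + n / b = b * (n / b) := by
                cases b with
                | zero => omega
                | succ c => simp [Nat.succ_sub_one]; ring
              omega

lemma es_lt (b n : ℕ) (hb : 1 < b) (h : b ≤ n) : erdosSloane b n < n := by
  have hq : 1 ≤ n / b := (Nat.one_le_div_iff (by omega)).mpr h
  have hqlt : n / b < n := Nat.div_lt_self (by omega) hb
  have hih := es_le b hb (n / b) hq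
  have hdm := Nat.div_add_mod n b
  have hm : n % b < b := Nat.mod_lt n (by omega)
  rw [es_rec b n hb (by omega)]
  by_cases hr : n % b = 0
  · rw [if_pos hr, one_mul]; omega
  · rw [if_neg hr]
    calc n % b * erdosSloane b (n / b) ≤ (b - 1) * (n / b) :=
          Nat.mul_le_mul (by omega) hih
      _ < n := by
          have key : (b - 1) * (n / b) + n / b = b * (n / b) := by
            cases b with
            | zero => omega
            | succ c => simp [Nat.succ_sub_one]; ring
          omega

lemma es_pow (b n : ℕ) (hb : 1 < b) (hn : n ≠ 0) :
    erdosSloane b n ≤ (b - 1) ^ (Nat.log b n + 1) := by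
  have hlen : (Nat.digits b n).length = Nat.log b n + 1 := Nat.digits_len b n hb hn
  calc erdosSloane b n ≤ (b - 1) ^ ((Nat.digits b n).filter (· ≠ 0)).length := by
        apply List.prod_le_pow_card
        intro x hx
        have hmem := List.mem_of_mem_filter hx
        have := Nat.digits_lt_base hb hmem
        omega
    _ ≤ (b - 1) ^ (Nat.digits b n).length :=
        Nat.pow_le_pow_right (by omega) (List.length_filter_le _ _)
    _ = (b - 1) ^ (Nat.log b n + 1) := by rw [hlen]

lemma exists_iter (b : ℕ) (hb : 1 < b) : ∀ n, ∃ k, k ≤ n ∧ (erdosSloane b)^[k] n < b := by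
  intro n
  induction n using Nat.strong_induction_on with
  | _ n ih =>
    rcases lt_or_ge n b with h | h
    · exact ⟨0, Nat.zero_le n, h⟩
    · have hlt : erdosSloane b n < n := es_lt b n hb h
      obtain ⟨k, hk1, hk2⟩ := ih (erdosSloane b n) hlt
      refine ⟨k + 1, by omega, ?_⟩
      rwa [Function.iterate_succ_apply]

lemma pers_le_self (b : ℕ) (hb : 1 < b) (n : ℕ) : erdosPersistence b n ≤ n := by
  obtain ⟨k, hk1, hk2⟩ := exists_iter b hb n
  exact le_trans (Nat.sInf_le hk2) hk1

lemma pers_add (b : ℕ) (hb : 1 < b) (n k : ℕ) :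
    erdosPersistence b n ≤ k + erdosPersistence b ((erdosSloane b)^[k] n) := by
  set m := (erdosSloane b)^[k] n with hm
  have hne : {j : ℕ | (erdosSloane b)^[j] m < b}.Nonempty := by
    obtain ⟨j, _, hj⟩ := exists_iter b hb m
    exact ⟨j, hj⟩
  have hj : (erdosSloane b)^[erdosPersistence b m] m < b := Nat.sInf_mem hne
  apply Nat.sInf_le
  show (erdosSloane b)^[k + erdosPersistence b m] n < b
  rw [add_comm, Function.iterate_add_apply]
  exact hj

lemma log_f_le (b : ℕ) (hb : 3 ≤ b) (n : ℕ) (hn : 1 ≤ n) :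
    Real.log (erdosSloane b n) ≤
      (Real.log ((b : ℝ) - 1) / Real.log b) * Real.log n + Real.log ((b : ℝ) - 1) := by
  have hb1 : (1:ℝ) < (b:ℝ) - 1 := by
    have : (3:ℝ) ≤ (b:ℝ) := by exact_mod_cast hb
    linarith
  have hc : 0 < Real.log ((b : ℝ) - 1) := Real.log_pos hb1
  have hLb : 0 < Real.log b := Real.log_pos (by exact_mod_cast (by omega : 1 < b))
  have hcast : ((b - 1 : ℕ) : ℝ) = (b : ℝ) - 1 := by
    push_cast [Nat.cast_sub (by omega : 1 ≤ b)]; ring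
  -- step 1
  have h1 : Real.log (erdosSloane b n) ≤ (Nat.log b n + 1 : ℝ) * Real.log ((b:ℝ) - 1) := by
    have hle : (erdosSloane b n : ℝ) ≤ ((b - 1 : ℕ) : ℝ) ^ (Nat.log b n + 1) := by
      exact_mod_cast es_pow b n (by omega) (by omega)
    calc Real.log (erdosSloane b n) ≤ Real.log (((b - 1 : ℕ) : ℝ) ^ (Nat.log b n + 1)) :=
          Real.log_le_log (by exact_mod_cast es_pos b n) hle
      _ = (Nat.log b n + 1 : ℝ) * Real.log ((b:ℝ) - 1) := by
          rw [Real.log_pow, hcast]; push_cast; ring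
  -- step 2
  have h2 : (Nat.log b n : ℝ) ≤ Real.log n / Real.log b := by
    have hpow : (b : ℝ) ^ (Nat.log b n) ≤ (n : ℝ) := by
      exact_mod_cast Nat.pow_log_le_self b (by omega : n ≠ 0)
    have := Real.log_le_log (by positivity) hpow
    rw [Real.log_pow] at this
    rw [le_div_iff₀ hLb]
    exact this
  calc Real.log (erdosSloane b n) ≤ (Nat.log b n + 1 : ℝ) * Real.log ((b:ℝ) - 1) := h1
    _ ≤ (Real.log n / Real.log b + 1) * Real.log ((b:ℝ) - 1) := by
        apply mul_le_mul_of_nonneg_right (by linarith) (le_of_lt hc)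
    _ = (Real.log ((b : ℝ) - 1) / Real.log b) * Real.log n + Real.log ((b : ℝ) - 1) := by
        field_simp

lemma iter_pos (b n : ℕ) (hn : 1 ≤ n) : ∀ k, 1 ≤ (erdosSloane b)^[k] n := by
  intro k
  induction k with
  | zero => simpa using hn
  | succ k ih => rw [Function.iterate_succ_apply']; exact es_pos b _

lemma iter_log_le (b : ℕ) (hb : 3 ≤ b) (n : ℕ) (hn : 1 ≤ n) (k : ℕ) :
    Real.log ((erdosSloane b)^[k] n) ≤
      (Real.log ((b : ℝ) - 1) / Real.log b) ^ k * Real.log n +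
        Real.log ((b : ℝ) - 1) / (1 - Real.log ((b : ℝ) - 1) / Real.log b) := by
  set α : ℝ := Real.log ((b : ℝ) - 1) / Real.log b with hαdef
  have hb1 : (1:ℝ) < (b:ℝ) - 1 := by
    have : (3:ℝ) ≤ (b:ℝ) := by exact_mod_cast hb
    linarith
  have hc : 0 < Real.log ((b : ℝ) - 1) := Real.log_pos hb1
  have hLb : 0 < Real.log b := Real.log_pos (by exact_mod_cast (by omega : 1 < b))
  have hα0 : 0 < α := div_pos hc hLb
  have hα1 : α < 1 := by
    rw [hαdef, div_lt_one hLb]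
    exact Real.log_lt_log (by linarith) (by linarith)
  set M : ℝ := Real.log ((b : ℝ) - 1) / (1 - α) with hMdef
  have hM : 0 < M := div_pos hc (by linarith)
  clear_value α
  clear_value M
  have h1α : (1 : ℝ) - α ≠ 0 := ne_of_gt (by linarith)
  have hfix : α * M + Real.log ((b : ℝ) - 1) = M := by
    rw [hMdef]; field_simp; ring
  induction k with
  | zero => simp; linarith
  | succ k ih =>
    rw [Function.iterate_succ_apply']
    calc Real.log (erdosSloane b ((erdosSloane b)^[k] n))
        ≤ α * Real.log ((erdosSloane b)^[k] n) + Real.log ((b : ℝ) - 1) := by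
          rw [hαdef]; exact log_f_le b hb _ (iter_pos b n hn k)
      _ ≤ α * (α ^ k * Real.log n + M) + Real.log ((b : ℝ) - 1) := by nlinarith
      _ = α ^ (k + 1) * Real.log n + (α * M + Real.log ((b : ℝ) - 1)) := by ring
      _ = α ^ (k + 1) * Real.log n + M := by rw [hfix]

lemma main_bound (b : ℕ) (hb : 3 ≤ b) : ∃ C : ℝ, 0 < C ∧ ∀ n : ℕ, 3 ≤ n →
    (erdosPersistence b n : ℝ) ≤
      Real.log (Real.log n) / Real.log (Real.log ((b : ℝ) - 1) / Real.log b)⁻¹ + C := by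
  set α : ℝ := Real.log ((b : ℝ) - 1) / Real.log b with hαdef
  have hb1 : (1:ℝ) < (b:ℝ) - 1 := by
    have : (3:ℝ) ≤ (b:ℝ) := by exact_mod_cast hb
    linarith
  have hc : 0 < Real.log ((b : ℝ) - 1) := Real.log_pos hb1
  have hLb : 0 < Real.log b := Real.log_pos (by exact_mod_cast (by omega : 1 < b))
  have hα0 : 0 < α := div_pos hc hLb
  have hα1 : α < 1 := by
    rw [hαdef, div_lt_one hLb]
    exact Real.log_lt_log (by linarith) (by linarith)
  set r : ℝ := Real.log α⁻¹ with hrdef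
  have hlogα : Real.log α = -r := by rw [hrdef, Real.log_inv]; ring
  have hr : 0 < r := by
    have := Real.log_neg hα0 hα1
    rw [hrdef, Real.log_inv]; linarith
  set M : ℝ := Real.log ((b : ℝ) - 1) / (1 - α) with hMdef
  have hM : 0 < M := div_pos hc (by linarith)
  refine ⟨Real.exp (1 + M) + 1, by positivity, ?_⟩
  intro n hn
  have hn1 : 1 ≤ n := by omega
  have hlogn : 1 < Real.log n := by
    rw [show (1:ℝ) = Real.log (Real.exp 1) by simp]
    apply Real.log_lt_log (Real.exp_pos 1)
    have h3 : (3:ℝ) ≤ (n:ℝ) := by exact_mod_cast hn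
    linarith [Real.exp_one_lt_d9]
  have hLL : 0 < Real.log (Real.log n) := Real.log_pos hlogn
  set k₀ : ℕ := ⌈Real.log (Real.log n) / r⌉₊ with hk₀
  have h1 : Real.log (Real.log n) ≤ (k₀ : ℝ) * r := by
    rw [← div_le_iff₀ hr]
    exact Nat.le_ceil _
  have h2 : α ^ k₀ ≤ (Real.log n)⁻¹ := by
    have hlog2 : Real.log (α ^ k₀) ≤ Real.log (Real.log n)⁻¹ := by
      rw [Real.log_pow, Real.log_inv, hlogα]
      push_cast
      nlinarith
    calc α ^ k₀ = Real.exp (Real.log (α ^ k₀)) := (Real.exp_log (pow_pos hα0 _)).symm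
      _ ≤ Real.exp (Real.log (Real.log n)⁻¹) := Real.exp_le_exp.mpr hlog2
      _ = (Real.log n)⁻¹ := Real.exp_log (by positivity)
  have h3 : Real.log ((erdosSloane b)^[k₀] n) ≤ 1 + M := by
    have hit := iter_log_le b hb n hn1 k₀
    have : α ^ k₀ * Real.log n ≤ 1 := by
      calc α ^ k₀ * Real.log n ≤ (Real.log n)⁻¹ * Real.log n :=
            mul_le_mul_of_nonneg_right h2 (by linarith)
        _ = 1 := inv_mul_cancel₀ (by linarith)
    rw [← hαdef, ← hMdef] at hit
    linarith
  have hmpos : 0 < ((erdosSloane b)^[k₀] n : ℝ) := by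
    exact_mod_cast iter_pos b n hn1 k₀
  have h4 : ((erdosSloane b)^[k₀] n : ℝ) ≤ Real.exp (1 + M) := by
    calc ((erdosSloane b)^[k₀] n : ℝ) = Real.exp (Real.log ((erdosSloane b)^[k₀] n)) :=
          (Real.exp_log hmpos).symm
      _ ≤ Real.exp (1 + M) := Real.exp_le_exp.mpr h3
  have h5 : erdosPersistence b n ≤ k₀ + (erdosSloane b)^[k₀] n := by
    have ha := pers_add b (by omega) n k₀
    have hb' := pers_le_self b (by omega) ((erdosSloane b)^[k₀] n)
    omega
  have h6 : (k₀ : ℝ) ≤ Real.log (Real.log n) / r + 1 :=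
    (Nat.ceil_lt_add_one (by positivity)).le
  have h7 : (erdosPersistence b n : ℝ) ≤ (k₀ : ℝ) + ((erdosSloane b)^[k₀] n : ℝ) := by
    exact_mod_cast h5
  calc (erdosPersistence b n : ℝ) ≤ (k₀ : ℝ) + ((erdosSloane b)^[k₀] n : ℝ) := h7
    _ ≤ (Real.log (Real.log n) / r + 1) + Real.exp (1 + M) := by linarith
    _ = Real.log (Real.log n) / r + (Real.exp (1 + M) + 1) := by ring

theorem erdos_sloane_persistence_upper (b : ℕ) (hb : 3 ≤ b) :
    let α : ℝ := Real.log (b - 1) / Real.log b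
    (∃ C : ℝ, ∀ n : ℕ, 3 ≤ n →
      (erdosPersistence b n : ℝ) ≤ Real.log (Real.log n) / Real.log α⁻¹ + C) ∧
    Filter.limsup (fun n : ℕ => (erdosPersistence b n : ℝ) / Real.log (Real.log n))
      Filter.atTop ≤ 1 / Real.log α⁻¹ := by
  intro α
  obtain ⟨C, hC, hmain⟩ := main_bound b hb
  have hb1 : (1:ℝ) < (b:ℝ) - 1 := by
    have : (3:ℝ) ≤ (b:ℝ) := by exact_mod_cast hb
    linarith
  have hc : 0 < Real.log ((b : ℝ) - 1) := Real.log_pos hb1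
  have hLb : 0 < Real.log b := Real.log_pos (by exact_mod_cast (by omega : 1 < b))
  have hα0 : 0 < α := div_pos hc hLb
  have hα1 : α < 1 := by
    show Real.log ((b : ℝ) - 1) / Real.log b < 1
    rw [div_lt_one hLb]
    exact Real.log_lt_log (by linarith) (by linarith)
  have hr : 0 < Real.log α⁻¹ := by
    have := Real.log_neg hα0 hα1
    rw [Real.log_inv]; linarith
  refine ⟨⟨C, fun n hn => hmain n hn⟩, ?_⟩
  have hLLpos : ∀ n : ℕ, 3 ≤ n → 0 < Real.log (Real.log n) := by
    intro n hn
    apply Real.log_pos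
    rw [show (1:ℝ) = Real.log (Real.exp 1) by simp]
    apply Real.log_lt_log (Real.exp_pos 1)
    have h3 : (3:ℝ) ≤ (n:ℝ) := by exact_mod_cast hn
    linarith [Real.exp_one_lt_d9]
  have htend_LL : Filter.Tendsto (fun n : ℕ => Real.log (Real.log n))
      Filter.atTop Filter.atTop :=
    Real.tendsto_log_atTop.comp (Real.tendsto_log_atTop.comp tendsto_natCast_atTop_atTop)
  have hg : Filter.Tendsto (fun n : ℕ => 1 / Real.log α⁻¹ + C / Real.log (Real.log n))
      Filter.atTop (nhds (1 / Real.log α⁻¹ + 0)) :=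
    tendsto_const_nhds.add (Filter.Tendsto.div_atTop tendsto_const_nhds htend_LL)
  have hev : ∀ᶠ n : ℕ in Filter.atTop,
      (erdosPersistence b n : ℝ) / Real.log (Real.log n) ≤
        1 / Real.log α⁻¹ + C / Real.log (Real.log n) := by
    filter_upwards [Filter.eventually_ge_atTop 3] with n hn
    have hLL := hLLpos n hn
    have h := hmain n hn
    calc (erdosPersistence b n : ℝ) / Real.log (Real.log n)
        ≤ (Real.log (Real.log n) / Real.log α⁻¹ + C) / Real.log (Real.log n) := by
          gcongr
      _ = 1 / Real.log α⁻¹ + C / Real.log (Real.log n) := by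
          field_simp
  have hev0 : ∀ᶠ n : ℕ in Filter.atTop,
      (0:ℝ) ≤ (erdosPersistence b n : ℝ) / Real.log (Real.log n) := by
    filter_upwards [Filter.eventually_ge_atTop 3] with n hn
    have hLL := hLLpos n hn
    positivity
  have hcob : Filter.IsCoboundedUnder (· ≤ ·) Filter.atTop
      (fun n : ℕ => (erdosPersistence b n : ℝ) / Real.log (Real.log n)) :=
    Filter.isCoboundedUnder_le_of_eventually_le Filter.atTop hev0
  have hbdd : Filter.IsBoundedUnder (· ≤ ·) Filter.atTop
      (fun n : ℕ => 1 / Real.log α⁻¹ + C / Real.log (Real.log n)) :=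
    hg.isBoundedUnder_le
  calc Filter.limsup (fun n : ℕ => (erdosPersistence b n : ℝ) / Real.log (Real.log n))
        Filter.atTop
      ≤ Filter.limsup (fun n : ℕ => 1 / Real.log α⁻¹ + C / Real.log (Real.log n))
        Filter.atTop := Filter.limsup_le_limsup hev hcob hbdd
    _ = 1 / Real.log α⁻¹ + 0 := hg.limsup_eq
    _ = 1 / Real.log α⁻¹ := by ring
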